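/- Let H be a complex N_r × N_t matrix of rank r ≥ 1, and let K be a positive integer with K·r ≥ min(N_i, N_o). Then for every complex N_o × N_i matrix W there exist matrices C_k ∈ C^{N_r × N_o} and P_k ∈ C^{N_t × N_i}, k = 1, ..., K, such that W = ∑_{k=1}^K C_k^H H P_k. -/

import Mathlib

open Matrix

private lemma exists_XY (Nr Nt r : ℕ) (H : Matrix (Fin Nr) (Fin Nt) ℂ) (hH : H.rank = r) :
    ∃ (X : Matrix (Fin r) (Fin Nr) ℂ) (Y : Matrix (Fin Nt) (Fin r) ℂ),
      X * H * Y = 1 := by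
  classical
  set V : Submodule ℂ (Fin Nr → ℂ) := LinearMap.range H.mulVecLin with hV
  have hfin : Module.finrank ℂ V = r := hH
  let b : Module.Basis (Fin r) ℂ V := Module.finBasisOfFinrankEq ℂ V hfin
  -- choose preimages
  have hmem : ∀ t : Fin r, (b t : Fin Nr → ℂ) ∈ V := fun t => (b t).2
  choose u hu using fun t : Fin r => (hmem t)
  -- projection onto V
  obtain ⟨q, hq⟩ := V.exists_isCompl
  let proj : (Fin Nr → ℂ) →ₗ[ℂ] V := Submodule.linearProjOfIsCompl V q hq
  let g : (Fin Nr → ℂ) →ₗ[ℂ] (Fin r → ℂ) := (b.equivFun : V →ₗ[ℂ] (Fin r → ℂ)).comp proj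
  have hg : ∀ t : Fin r, g (b t) = fun s => if t = s then 1 else 0 := by
    intro t
    have : proj (b t) = b t := Submodule.linearProjOfIsCompl_apply_left hq (b t)
    funext s
    simp only [g, LinearMap.comp_apply, this, LinearEquiv.coe_coe]
    rw [b.equivFun_self]
  refine ⟨LinearMap.toMatrix' g, Matrix.of fun i t => u t i, ?_⟩
  ext s t
  have this : (LinearMap.toMatrix' g * H * Matrix.of fun i t => u t i) s t
      = (LinearMap.toMatrix' g).mulVec (H.mulVec (u t)) s := by
    simp only [Matrix.mul_apply, Matrix.mulVec, dotProduct, Matrix.of_apply,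
      Finset.sum_mul, Finset.mul_sum]
    rw [Finset.sum_comm]
    exact Finset.sum_congr rfl fun _ _ => Finset.sum_congr rfl fun _ _ => by ring
  rw [this]
  have hmv : (LinearMap.toMatrix' g).mulVec (H.mulVec (u t)) = g (H.mulVec (u t)) := by
    rw [← Matrix.toLin'_apply, Matrix.toLin'_toMatrix']
  have hHu : H.mulVec (u t) = (b t : Fin Nr → ℂ) := hu t
  rw [hmv, hHu, hg t]
  simp [Matrix.one_apply, eq_comm]

private lemma helper (No Ni K r Nr Nt : ℕ) (hr : 1 ≤ r) (hNi : Ni ≤ K * r)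
    (H : Matrix (Fin Nr) (Fin Nt) ℂ)
    (X : Matrix (Fin r) (Fin Nr) ℂ) (Y : Matrix (Fin Nt) (Fin r) ℂ)
    (hXY : X * H * Y = 1) (W : Matrix (Fin No) (Fin Ni) ℂ) :
    ∃ (C : Fin K → Matrix (Fin Nr) (Fin No) ℂ)
      (P : Fin K → Matrix (Fin Nt) (Fin Ni) ℂ),
      W = ∑ k : Fin K, (C k)ᴴ * H * P k := by
  classical
  have hr0 : 0 < r := hr
  set A : Fin K → Matrix (Fin No) (Fin r) ℂ :=
    fun k => Matrix.of fun i t => if h : k.1 * r + t.1 < Ni then W i ⟨_, h⟩ else 0 with hA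
  set B : Fin K → Matrix (Fin r) (Fin Ni) ℂ :=
    fun k => Matrix.of fun t j => if k.1 * r + t.1 = j.1 then 1 else 0 with hB
  refine ⟨fun k => (A k * X)ᴴ, fun k => Y * B k, ?_⟩
  have key : ∀ k, ((A k * X)ᴴ)ᴴ * H * (Y * B k) = A k * (X * H * Y) * B k := by
    intro k
    rw [conjTranspose_conjTranspose]
    simp only [Matrix.mul_assoc]
  have : ∑ k : Fin K, ((A k * X)ᴴ)ᴴ * H * (Y * B k) = ∑ k : Fin K, A k * B k := by
    refine Finset.sum_congr rfl fun k _ => ?_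
    rw [key k, hXY, Matrix.mul_one]
  rw [this]
  -- now show W = ∑ k, A k * B k
  ext i j
  rw [Matrix.sum_apply]
  have hjk : (j : ℕ) / r < K := (Nat.div_lt_iff_lt_mul hr0).2 (lt_of_lt_of_le j.2 hNi)
  set k0 : Fin K := ⟨(j : ℕ) / r, hjk⟩
  set t0 : Fin r := ⟨(j : ℕ) % r, Nat.mod_lt _ hr0⟩
  have huniq : ∀ (k : Fin K) (t : Fin r), k.1 * r + t.1 = (j : ℕ) → k = k0 ∧ t = t0 := by
    intro k t h
    have hj : (j : ℕ) = t.1 + r * k.1 := by rw [← h, Nat.add_comm, Nat.mul_comm]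
    have hk : (j : ℕ) / r = k.1 := by
      rw [hj, Nat.add_mul_div_left _ _ hr0, Nat.div_eq_of_lt t.2, Nat.zero_add]
    have ht : (j : ℕ) % r = t.1 := by
      rw [hj, Nat.add_mul_mod_self_left, Nat.mod_eq_of_lt t.2]
    exact ⟨Fin.ext hk.symm, Fin.ext ht.symm⟩
  have hk0t0 : k0.1 * r + t0.1 = (j : ℕ) := by
    simp only [k0, t0]
    rw [Nat.mul_comm]
    exact Nat.div_add_mod _ _
  rw [Finset.sum_eq_single k0]
  · have : (A k0 * B k0) i j = ∑ t : Fin r, A k0 i t * B k0 t j := by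
      simp [Matrix.mul_apply]
    rw [this, Finset.sum_eq_single t0]
    · simp [hA, hB, hk0t0, j.isLt]
    · intro t _ hne
      simp only [hA, hB, Matrix.of_apply]
      rw [if_neg, mul_zero]
      intro hc
      exact hne (huniq k0 t hc).2
    · intro hn; exact absurd (Finset.mem_univ t0) hn
  · intro k _ hne
    have : (A k * B k) i j = ∑ t : Fin r, A k i t * B k t j := by
      simp [Matrix.mul_apply]
    rw [this]
    refine Finset.sum_eq_zero fun t _ => ?_
    simp only [hA, hB, Matrix.of_apply]
    rw [if_neg, mul_zero]
    intro hc
    exact hne (huniq k t hc).1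
  · intro hn; exact absurd (Finset.mem_univ k0) hn

/-- If `K * r ≥ min N_i N_o`, then every `W` can be realized as `∑ k, (C k)ᴴ * H * P k`. -/
theorem feasible_of_Kr_ge_min (Nr Nt No Ni K r : ℕ)
    (H : Matrix (Fin Nr) (Fin Nt) ℂ) (hH : H.rank = r) (hr : 1 ≤ r)
    (hK : 1 ≤ K) (hKr : min Ni No ≤ K * r) :
    ∀ W : Matrix (Fin No) (Fin Ni) ℂ,
      ∃ (C : Fin K → Matrix (Fin Nr) (Fin No) ℂ)
        (P : Fin K → Matrix (Fin Nt) (Fin Ni) ℂ),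
        W = ∑ k : Fin K, (C k)ᴴ * H * P k := by
  intro W
  obtain ⟨X, Y, hXY⟩ := exists_XY Nr Nt r H hH
  rcases le_total Ni No with h | h
  · exact helper No Ni K r Nr Nt hr (by omega) H X Y hXY W
  · -- min = No; work with Wᴴ and Hᴴ
    have hXY' : Yᴴ * Hᴴ * Xᴴ = 1 := by
      have := congrArg Matrix.conjTranspose hXY
      simpa [Matrix.conjTranspose_mul, Matrix.mul_assoc] using this
    obtain ⟨C', P', hW⟩ := helper Ni No K r Nt Nr hr (by omega) Hᴴ Yᴴ Xᴴ hXY' Wᴴ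
    refine ⟨fun k => P' k, fun k => C' k, ?_⟩
    have := congrArg Matrix.conjTranspose hW
    simpa [Matrix.conjTranspose_sum, Matrix.conjTranspose_mul, Matrix.mul_assoc] using this
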